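/- Let K be a positive integer and let (μ, Ω, Λ) and (μ̃, Ω̃, Λ̃) be MSN parameters: μ, μ̃, Λ, Λ̃ ∈ ℝ^K and Ω, Ω̃ K×K positive definite, with Δ = Ω^{1/2}·Λ/√(1+ΛᵀΛ), Γ = Ω − ΔΔᵀ, and analogously Δ̃, Γ̃. Let MGF and M̃GF denote the corresponding MSN moment generating functions MGF(t) = 2·exp(tᵀμ + ½·tᵀΩt)·Φ(Δᵀt) and M̃GF(t) = 2·exp(tᵀμ̃ + ½·tᵀΩ̃t)·Φ(Δ̃ᵀt). For every t ∈ ℝ^K with Δᵀt ≤ 0 and tᵀ(Γ̃ − Γ)t > 0, lim_{c→∞} MGF(ct)/M̃GF(ct) = 0. -/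

import Mathlib

open Filter Matrix MeasureTheory
open Set ProbabilityTheory

noncomputable section

/-- Standard normal cdf Φ. -/
def stdNormalCdf (x : ℝ) : ℝ :=
  ∫ u in Set.Iio x, (Real.sqrt (2 * Real.pi))⁻¹ * Real.exp (-(u ^ 2) / 2)

/-- The Δ parameter of MSN(μ, Ω, Λ): Δ = Ω^{1/2}·Λ/√(1+ΛᵀΛ). -/
def msnDelta {K : ℕ} (Ω : Matrix (Fin K) (Fin K) ℝ) (hΩ : Ω.PosDef)
    (Λ : Fin K → ℝ) : Fin K → ℝ :=
  (Real.sqrt (1 + Λ ⬝ᵥ Λ))⁻¹ • (hΩ.posSemidef.1.eigenvectorUnitary.1 *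
    diagonal ((RCLike.ofReal : ℝ → ℝ) ∘ (Real.sqrt ∘ hΩ.posSemidef.1.eigenvalues)) *
    (star hΩ.posSemidef.1.eigenvectorUnitary : Matrix (Fin K) (Fin K) ℝ)).mulVec Λ

/-- The Γ parameter of MSN(μ, Ω, Λ): Γ = Ω − ΔΔᵀ. -/
def msnGamma {K : ℕ} (Ω : Matrix (Fin K) (Fin K) ℝ) (hΩ : Ω.PosDef)
    (Λ : Fin K → ℝ) : Matrix (Fin K) (Fin K) ℝ :=
  Ω - vecMulVec (msnDelta Ω hΩ Λ) (msnDelta Ω hΩ Λ)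

/-- The MSN moment generating function. -/
def msnMGF {K : ℕ} (μ : Fin K → ℝ) (Ω : Matrix (Fin K) (Fin K) ℝ) (hΩ : Ω.PosDef)
    (Λ : Fin K → ℝ) (t : Fin K → ℝ) : ℝ :=
  2 * Real.exp (t ⬝ᵥ μ + t ⬝ᵥ Ω.mulVec t / 2) * stdNormalCdf (msnDelta Ω hΩ Λ ⬝ᵥ t)


noncomputable def phi (u : ℝ) : ℝ := (Real.sqrt (2 * Real.pi))⁻¹ * Real.exp (-(u ^ 2) / 2)

lemma phi_eq_gaussian : phi = gaussianPDFReal 0 1 := by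
  ext u; simp [phi, gaussianPDFReal]

lemma phi_integrable : Integrable phi := phi_eq_gaussian ▸ integrable_gaussianPDFReal 0 1

lemma integral_phi : ∫ u, phi u = 1 := by
  rw [phi_eq_gaussian]; exact integral_gaussianPDFReal_eq_one 0 one_ne_zero

lemma phi_pos (u : ℝ) : 0 < phi u := by unfold phi; positivity

lemma phi_mul_exp (x u : ℝ) : phi u * Real.exp (x * u)
    = Real.exp (x ^ 2 / 2) * gaussianPDFReal x 1 u := by
  simp only [phi, gaussianPDFReal]
  rw [mul_comm (Real.exp (x^2/2)), mul_assoc, mul_assoc, ← Real.exp_add, ← Real.exp_add]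
  norm_num
  left
  ring

lemma integral_phi_mul_exp (x : ℝ) : ∫ u, phi u * Real.exp (x * u) = Real.exp (x ^ 2 / 2) := by
  simp_rw [phi_mul_exp]
  rw [integral_const_mul, integral_gaussianPDFReal_eq_one x one_ne_zero, mul_one]

lemma integrable_phi_mul_exp (x : ℝ) : Integrable (fun u => phi u * Real.exp (x * u)) := by
  simp_rw [phi_mul_exp]
  exact (integrable_gaussianPDFReal x 1).const_mul _

lemma cdf_eq (x : ℝ) : stdNormalCdf x = ∫ u in Iio x, phi u := rfl

lemma cdf_pos (x : ℝ) : 0 < stdNormalCdf x := by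
  rw [cdf_eq, setIntegral_pos_iff_support_of_nonneg_ae]
  · have : Function.support phi = Set.univ := by
      ext u; simp [Function.mem_support, (phi_pos u).ne']
    rw [this, Set.univ_inter]
    simp [Real.volume_Iio]
  · exact Filter.Eventually.of_forall fun u => (phi_pos u).le
  · exact phi_integrable.integrableOn

lemma cdf_mono : Monotone stdNormalCdf := by
  intro a b hab
  rw [cdf_eq, cdf_eq]
  exact setIntegral_mono_set phi_integrable.integrableOn
    (Filter.Eventually.of_forall fun u => (phi_pos u).le)
    (HasSubset.Subset.eventuallyLE (Iio_subset_Iio hab))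

lemma cdf_le_one (x : ℝ) : stdNormalCdf x ≤ 1 := by
  rw [cdf_eq, ← integral_phi]
  exact setIntegral_le_integral phi_integrable (Filter.Eventually.of_forall fun u => (phi_pos u).le)

lemma cdf_zero : stdNormalCdf 0 = 1 / 2 := by
  have h2 : ∫ u in Iic (0:ℝ), phi u = ∫ u in Ioi (0:ℝ), phi u := by
    have h := integral_comp_neg_Ioi (0:ℝ) phi
    rw [neg_zero] at h
    rw [← h]
    congr 1; ext u; simp [phi]
  have h3 : (∫ u in Iic (0:ℝ), phi u) + ∫ u in Ioi (0:ℝ), phi u = 1 := by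
    rw [intervalIntegral.integral_Iic_add_Ioi phi_integrable.integrableOn phi_integrable.integrableOn, integral_phi]
  have h4 : stdNormalCdf 0 = ∫ u in Iic (0:ℝ), phi u := by
    rw [cdf_eq]
    exact setIntegral_congr_set Iio_ae_eq_Iic
  rw [h4]; linarith

lemma integrable_phi_exp_sub (x : ℝ) :
    Integrable (fun u => phi u * Real.exp (x * u - x ^ 2)) := by
  have : (fun u => phi u * Real.exp (x * u - x ^ 2))
      = fun u => phi u * Real.exp (x * u) * Real.exp (-(x ^ 2)) := by
    ext u; rw [mul_assoc, ← Real.exp_add]; ring_nf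
  rw [this]; exact (integrable_phi_mul_exp x).mul_const _

lemma cdf_le_exp {x : ℝ} (hx : x ≤ 0) : stdNormalCdf x ≤ Real.exp (-(x ^ 2) / 2) := by
  rw [cdf_eq]
  have h1 : ∫ u in Iio x, phi u ≤ ∫ u in Iio x, phi u * Real.exp (x * u - x ^ 2) := by
    refine setIntegral_mono_on phi_integrable.integrableOn
      ?_ measurableSet_Iio fun u hu => ?_
    · exact (integrable_phi_exp_sub x).integrableOn
    · nth_rewrite 1 [← mul_one (phi u)]
      refine mul_le_mul_of_nonneg_left (Real.one_le_exp ?_) (phi_pos u).le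
      have hu' : u ≤ x := le_of_lt hu
      nlinarith
  have h2 : ∫ u in Iio x, phi u * Real.exp (x * u - x ^ 2)
      ≤ ∫ u, phi u * Real.exp (x * u - x ^ 2) := by
    exact setIntegral_le_integral (integrable_phi_exp_sub x)
      (Filter.Eventually.of_forall fun u =>
        mul_nonneg (phi_pos u).le (Real.exp_nonneg _))
  have h3 : ∫ u, phi u * Real.exp (x * u - x ^ 2) = Real.exp (-(x ^ 2) / 2) := by
    have : ∀ u, phi u * Real.exp (x * u - x ^ 2)
        = phi u * Real.exp (x * u) * Real.exp (-(x ^ 2)) := by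
      intro u; rw [mul_assoc, ← Real.exp_add]; ring_nf
    simp_rw [this]
    rw [integral_mul_const, integral_phi_mul_exp, ← Real.exp_add]
    ring_nf
  linarith

lemma cdf_lower {x : ℝ} (hx : x ≤ -1) :
    (-x)⁻¹ * ((Real.sqrt (2 * Real.pi))⁻¹ * Real.exp (-(x ^ 2) / 2 - 3 / 2))
      ≤ stdNormalCdf x := by
  set a : ℝ := (-x)⁻¹ with ha
  have hx0 : x < 0 := lt_of_le_of_lt hx (by norm_num)
  have hxpos : (0:ℝ) < -x := by linarith
  have ha0 : 0 < a := by rw [ha]; exact inv_pos.mpr hxpos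
  have ha1 : a ≤ 1 := by
    rw [ha, inv_le_one_iff₀]; right; linarith
  set c : ℝ := (Real.sqrt (2 * Real.pi))⁻¹ * Real.exp (-(x ^ 2) / 2 - 3 / 2) with hc
  have key : ∀ u ∈ Ico (x - a) x, c ≤ phi u := by
    intro u hu
    obtain ⟨h1, h2⟩ := hu
    have hax : a * x = -1 := by
      rw [ha, inv_neg, neg_mul, inv_mul_cancel₀ hx0.ne]
    have hu2 : u ^ 2 ≤ x ^ 2 + 3 := by nlinarith [sq_nonneg (u - x), sq_nonneg a]
    rw [hc]
    unfold phi
    refine mul_le_mul_of_nonneg_left (Real.exp_le_exp.mpr ?_) (by positivity)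
    linarith
  have h1 : ∫ u in Ico (x - a) x, phi u ≤ stdNormalCdf x := by
    rw [cdf_eq]
    exact setIntegral_mono_set phi_integrable.integrableOn
      (Filter.Eventually.of_forall fun u => (phi_pos u).le)
      (HasSubset.Subset.eventuallyLE fun u hu => lt_of_lt_of_le hu.2 le_rfl)
  have h2 : a * c ≤ ∫ u in Ico (x - a) x, phi u := by
    have := setIntegral_mono_on (f := fun _ => c) (g := phi) (s := Ico (x - a) x)
      (integrableOn_const measure_Ico_lt_top.ne)
      (phi_integrable.integrableOn) measurableSet_Ico key
    rw [setIntegral_const, Real.volume_real_Ico_of_le (by linarith), smul_eq_mul] at this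
    have hvol : x - (x - a) = a := by
      ring
    rw [hvol] at this
    exact this
  calc a * ((Real.sqrt (2 * Real.pi))⁻¹ * Real.exp (-(x ^ 2) / 2 - 3 / 2))
      = a * c := by rw [hc]
    _ ≤ _ := le_trans h2 h1

lemma dot_vecMulVec {K : ℕ} (d t : Fin K → ℝ) :
    t ⬝ᵥ (vecMulVec d d).mulVec t = (d ⬝ᵥ t) ^ 2 := by
  simp only [dotProduct, mulVec, vecMulVec_apply, Finset.mul_sum]
  rw [pow_two, Finset.sum_mul_sum]
  exact Finset.sum_congr rfl fun j _ => Finset.sum_congr rfl fun k _ => by ring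

lemma msnMGF_smul {K : ℕ} (μ : Fin K → ℝ) (Ω : Matrix (Fin K) (Fin K) ℝ) (hΩ : Ω.PosDef)
    (Λ : Fin K → ℝ) (c : ℝ) (t : Fin K → ℝ) :
    msnMGF μ Ω hΩ Λ (c • t) = 2 * Real.exp (c * (t ⬝ᵥ μ) + c ^ 2 * (t ⬝ᵥ Ω.mulVec t) / 2)
      * stdNormalCdf (c * (msnDelta Ω hΩ Λ ⬝ᵥ t)) := by
  unfold msnMGF
  have h1 : (c • t) ⬝ᵥ μ + (c • t) ⬝ᵥ Ω.mulVec (c • t) / 2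
      = c * (t ⬝ᵥ μ) + c ^ 2 * (t ⬝ᵥ Ω.mulVec t) / 2 := by
    simp only [smul_dotProduct, dotProduct_smul, mulVec_smul, smul_eq_mul]
    ring
  have h2 : msnDelta Ω hΩ Λ ⬝ᵥ (c • t) = c * (msnDelta Ω hΩ Λ ⬝ᵥ t) := by
    simp only [dotProduct_smul, smul_eq_mul]
  rw [h1, h2]

lemma msnMGF_pos {K : ℕ} (μ : Fin K → ℝ) (Ω : Matrix (Fin K) (Fin K) ℝ) (hΩ : Ω.PosDef)
    (Λ : Fin K → ℝ) (t : Fin K → ℝ) : 0 < msnMGF μ Ω hΩ Λ t :=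
  mul_pos (mul_pos two_pos (Real.exp_pos _)) (cdf_pos _)

set_option maxHeartbeats 1000000 in
theorem stmt14 (K : ℕ) (hK : 0 < K)
    (μ Λ μ' Λ' : Fin K → ℝ) (Ω Ω' : Matrix (Fin K) (Fin K) ℝ)
    (hΩ : Ω.PosDef) (hΩ' : Ω'.PosDef) :
    ∀ t : Fin K → ℝ, msnDelta Ω hΩ Λ ⬝ᵥ t ≤ 0 →
      0 < t ⬝ᵥ (msnGamma Ω' hΩ' Λ' - msnGamma Ω hΩ Λ).mulVec t →
      Tendsto (fun c : ℝ => msnMGF μ Ω hΩ Λ (c • t) / msnMGF μ' Ω' hΩ' Λ' (c • t))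
        atTop (nhds 0) := by
  intro t hδle hεpos
  obtain ⟨D, hD⟩ : ∃ x : ℝ, x = msnDelta Ω hΩ Λ ⬝ᵥ t := ⟨_, rfl⟩
  obtain ⟨D', hD'⟩ : ∃ x : ℝ, x = msnDelta Ω' hΩ' Λ' ⬝ᵥ t := ⟨_, rfl⟩
  obtain ⟨TO, hTO⟩ : ∃ x : ℝ, x = t ⬝ᵥ Ω.mulVec t := ⟨_, rfl⟩
  obtain ⟨TO', hTO'⟩ : ∃ x : ℝ, x = t ⬝ᵥ Ω'.mulVec t := ⟨_, rfl⟩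
  obtain ⟨A, hA⟩ : ∃ x : ℝ, x = t ⬝ᵥ μ - t ⬝ᵥ μ' := ⟨_, rfl⟩
  obtain ⟨ε, hε⟩ : ∃ x : ℝ, x = t ⬝ᵥ (msnGamma Ω' hΩ' Λ' - msnGamma Ω hΩ Λ).mulVec t := ⟨_, rfl⟩
  rw [← hD] at hδle
  rw [← hε] at hεpos
  have hεeq : TO - TO' = D ^ 2 - D' ^ 2 - ε := by
    have h : ε = (TO' - D' ^ 2) - (TO - D ^ 2) := by
      rw [hε, hTO, hTO', hD, hD']
      simp only [msnGamma, sub_mulVec, dotProduct_sub, dot_vecMulVec]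
    linarith
  obtain ⟨C, hC⟩ : ∃ x : ℝ, x = Real.sqrt (2 * Real.pi) * Real.exp (3 / 2) * |D'| := ⟨_, rfl⟩
  have hC0 : 0 ≤ C := by rw [hC]; positivity
  have hratio : ∀ c : ℝ, msnMGF μ Ω hΩ Λ (c • t) / msnMGF μ' Ω' hΩ' Λ' (c • t)
      = Real.exp (c * A + c ^ 2 * (TO - TO') / 2)
        * (stdNormalCdf (c * D) / stdNormalCdf (c * D')) := by
    intro c
    rw [msnMGF_smul, msnMGF_smul, mul_div_mul_comm, mul_div_mul_comm,
      div_self (by norm_num : (2:ℝ) ≠ 0), one_mul, ← Real.exp_sub,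
      ← hD, ← hD', ← hTO, ← hTO']
    have harg : c * (t ⬝ᵥ μ) + c ^ 2 * TO / 2 - (c * (t ⬝ᵥ μ') + c ^ 2 * TO' / 2)
        = c * A + c ^ 2 * (TO - TO') / 2 := by rw [hA]; ring
    rw [harg]
  have key : ∀ᶠ c in atTop, msnMGF μ Ω hΩ Λ (c • t) / msnMGF μ' Ω' hΩ' Λ' (c • t)
      ≤ (C * c + 2) * Real.exp (c * A - c ^ 2 * ε / 2) := by
    rcases lt_or_ge D' 0 with hD'neg | hD'nn
    · filter_upwards [eventually_ge_atTop (max 1 (-D')⁻¹)] with c hc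
      have hc1 : (1:ℝ) ≤ c := le_trans (le_max_left _ _) hc
      have hc0 : (0:ℝ) ≤ c := by linarith
      have hmD' : (0:ℝ) < -D' := by linarith
      have hcD' : c * D' ≤ -1 := by
        have h1 : (-D')⁻¹ ≤ c := le_trans (le_max_right _ _) hc
        have h2 := mul_le_mul_of_nonneg_right h1 hmD'.le
        rw [inv_mul_cancel₀ hmD'.ne'] at h2
        nlinarith
      have hcD'0 : (0:ℝ) < -(c * D') := by nlinarith
      have hp : stdNormalCdf (c * D) ≤ Real.exp (-((c * D) ^ 2) / 2) :=
        cdf_le_exp (mul_nonpos_iff.mpr (Or.inl ⟨hc0, hδle⟩))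
      have hq := cdf_lower hcD'
      have hqb0 : 0 < (-(c * D'))⁻¹
          * ((Real.sqrt (2 * Real.pi))⁻¹ * Real.exp (-((c * D') ^ 2) / 2 - 3 / 2)) := by
        positivity
      have hdiv : stdNormalCdf (c * D) / stdNormalCdf (c * D')
          ≤ Real.exp (-((c * D) ^ 2) / 2) / ((-(c * D'))⁻¹
            * ((Real.sqrt (2 * Real.pi))⁻¹ * Real.exp (-((c * D') ^ 2) / 2 - 3 / 2))) :=
        div_le_div₀ (Real.exp_nonneg _) hp hqb0 hq
      have hrhs : Real.exp (-((c * D) ^ 2) / 2) / ((-(c * D'))⁻¹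
            * ((Real.sqrt (2 * Real.pi))⁻¹ * Real.exp (-((c * D') ^ 2) / 2 - 3 / 2)))
          = C * c * Real.exp (-((c * D) ^ 2) / 2 + (c * D') ^ 2 / 2) := by
        rw [hC, abs_of_neg hD'neg]
        rw [div_eq_iff (ne_of_gt hqb0)]
        have h1 : c * (-D') * (-(c * D'))⁻¹ = 1 := by
          rw [show -(c * D') = c * (-D') by ring]
          exact mul_inv_cancel₀ (by positivity)
        have h2 : Real.sqrt (2 * Real.pi) * (Real.sqrt (2 * Real.pi))⁻¹ = 1 :=
          mul_inv_cancel₀ (by positivity)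
        have h3 : Real.exp (3 / 2) * (Real.exp (-((c * D) ^ 2) / 2 + (c * D') ^ 2 / 2)
              * Real.exp (-((c * D') ^ 2) / 2 - 3 / 2)) = Real.exp (-((c * D) ^ 2) / 2) := by
          rw [← Real.exp_add, ← Real.exp_add]
          congr 1
          ring
        have h4 : Real.sqrt (2 * Real.pi) * Real.exp (3 / 2) * -D' * c
              * Real.exp (-((c * D) ^ 2) / 2 + (c * D') ^ 2 / 2)
              * ((-(c * D'))⁻¹ * ((Real.sqrt (2 * Real.pi))⁻¹
                * Real.exp (-((c * D') ^ 2) / 2 - 3 / 2)))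
            = (Real.sqrt (2 * Real.pi) * (Real.sqrt (2 * Real.pi))⁻¹)
              * ((c * (-D')) * (-(c * D'))⁻¹)
              * (Real.exp (3 / 2) * (Real.exp (-((c * D) ^ 2) / 2 + (c * D') ^ 2 / 2)
                * Real.exp (-((c * D') ^ 2) / 2 - 3 / 2))) := by ring
        rw [h4, h1, h2, one_mul, one_mul, h3]
      rw [hratio c]
      calc Real.exp (c * A + c ^ 2 * (TO - TO') / 2)
            * (stdNormalCdf (c * D) / stdNormalCdf (c * D'))
          ≤ Real.exp (c * A + c ^ 2 * (TO - TO') / 2)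
            * (C * c * Real.exp (-((c * D) ^ 2) / 2 + (c * D') ^ 2 / 2)) := by
            rw [← hrhs]
            exact mul_le_mul_of_nonneg_left hdiv (Real.exp_nonneg _)
        _ = C * c * Real.exp (c * A + c ^ 2 * (TO - TO') / 2
              + (-((c * D) ^ 2) / 2 + (c * D') ^ 2 / 2)) := by
            rw [show Real.exp (c * A + c ^ 2 * (TO - TO') / 2)
                * (C * c * Real.exp (-((c * D) ^ 2) / 2 + (c * D') ^ 2 / 2))
              = C * c * (Real.exp (c * A + c ^ 2 * (TO - TO') / 2)
                * Real.exp (-((c * D) ^ 2) / 2 + (c * D') ^ 2 / 2)) from by ring,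
              ← Real.exp_add]
        _ = C * c * Real.exp (c * A - c ^ 2 * ε / 2) := by
            have harg2 : c * A + c ^ 2 * (TO - TO') / 2
                + (-((c * D) ^ 2) / 2 + (c * D') ^ 2 / 2) = c * A - c ^ 2 * ε / 2 := by
              rw [hεeq]; ring
            rw [harg2]
        _ ≤ (C * c + 2) * Real.exp (c * A - c ^ 2 * ε / 2) := by
            have := Real.exp_nonneg (c * A - c ^ 2 * ε / 2)
            nlinarith
    · filter_upwards [eventually_ge_atTop 0] with c hc0
      have hp : stdNormalCdf (c * D) ≤ Real.exp (-((c * D) ^ 2) / 2) :=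
        cdf_le_exp (mul_nonpos_iff.mpr (Or.inl ⟨hc0, hδle⟩))
      have hq : (1:ℝ) / 2 ≤ stdNormalCdf (c * D') := by
        rw [← cdf_zero]
        exact cdf_mono (mul_nonneg hc0 hD'nn)
      have hdiv : stdNormalCdf (c * D) / stdNormalCdf (c * D')
          ≤ Real.exp (-((c * D) ^ 2) / 2) / (1 / 2) :=
        div_le_div₀ (Real.exp_nonneg _) hp (by norm_num) hq
      rw [hratio c]
      calc Real.exp (c * A + c ^ 2 * (TO - TO') / 2)
            * (stdNormalCdf (c * D) / stdNormalCdf (c * D'))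
          ≤ Real.exp (c * A + c ^ 2 * (TO - TO') / 2)
            * (Real.exp (-((c * D) ^ 2) / 2) / (1 / 2)) :=
            mul_le_mul_of_nonneg_left hdiv (Real.exp_nonneg _)
        _ = 2 * Real.exp (c * A + c ^ 2 * (TO - TO') / 2 + -((c * D) ^ 2) / 2) := by
            rw [show Real.exp (c * A + c ^ 2 * (TO - TO') / 2)
                * (Real.exp (-((c * D) ^ 2) / 2) / (1 / 2))
              = 2 * (Real.exp (c * A + c ^ 2 * (TO - TO') / 2)
                * Real.exp (-((c * D) ^ 2) / 2)) from by ring,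
              ← Real.exp_add]
        _ ≤ (C * c + 2) * Real.exp (c * A - c ^ 2 * ε / 2) := by
            have harg : c * A + c ^ 2 * (TO - TO') / 2 + -((c * D) ^ 2) / 2
                ≤ c * A - c ^ 2 * ε / 2 := by
              rw [hεeq]
              nlinarith [sq_nonneg (c * D')]
            have h2C : (2:ℝ) ≤ C * c + 2 := by nlinarith
            exact mul_le_mul h2C (Real.exp_le_exp.mpr harg) (Real.exp_nonneg _) (by linarith)
  have key2 : ∀ᶠ c in atTop, (C * c + 2) * Real.exp (c * A - c ^ 2 * ε / 2)
      ≤ C * (c * Real.exp (-c)) + 2 * Real.exp (-c) := by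
    filter_upwards [eventually_ge_atTop (max 0 ((2 * |A| + 2) / ε))] with c hc
    have hc0 : (0:ℝ) ≤ c := le_trans (le_max_left _ _) hc
    have h5 : 2 * |A| + 2 ≤ c * ε := by
      have h := le_trans (le_max_right _ _) hc
      rwa [div_le_iff₀ hεpos] at h
    have harg : c * A - c ^ 2 * ε / 2 ≤ -c := by
      have habs : c * A ≤ c * |A| := mul_le_mul_of_nonneg_left (le_abs_self A) hc0
      have h6 : c * (2 * |A| + 2) ≤ c * (c * ε) := mul_le_mul_of_nonneg_left h5 hc0
      have h7 : c * (c * ε) = c ^ 2 * ε := by ring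
      have h8 : c * (2 * |A| + 2) = 2 * (c * |A|) + 2 * c := by ring
      linarith
    calc (C * c + 2) * Real.exp (c * A - c ^ 2 * ε / 2)
        ≤ (C * c + 2) * Real.exp (-c) :=
          mul_le_mul_of_nonneg_left (Real.exp_le_exp.mpr harg)
            (by linarith [mul_nonneg hC0 hc0])
      _ = C * (c * Real.exp (-c)) + 2 * Real.exp (-c) := by ring
  have hlim : Tendsto (fun c : ℝ => C * (c * Real.exp (-c)) + 2 * Real.exp (-c))
      atTop (nhds 0) := by
    have l1 : Tendsto (fun c : ℝ => c * Real.exp (-c)) atTop (nhds 0) := by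
      have h := Real.tendsto_pow_mul_exp_neg_atTop_nhds_zero 1
      simpa using h
    have l2 := Real.tendsto_exp_neg_atTop_nhds_zero
    have h := (l1.const_mul C).add (l2.const_mul 2)
    simpa using h
  refine squeeze_zero' (Eventually.of_forall fun c => ?_)
    (key.mp (key2.mono fun c h2 h1 => le_trans h1 h2)) hlim
  exact div_nonneg (msnMGF_pos _ _ _ _ _).le (msnMGF_pos _ _ _ _ _).le
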